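/- Lemma 2.2 (existence of the Fourier multiplier M). There exist constants c ∈ (0,1) and C > 0 such that for every ν ∈ (0,1) there exists a function M = M(t,k,ξ), defined for t ≥ 0, k ∈ ℤ, ξ ∈ ℝ, which is C¹ in t and in ξ with ∂_t M ≤ 0, satisfying: (i) M(0,k,ξ) = 1 for all k, ξ, and M(t,0,ξ) = 1 for all t, ξ; (ii) c ≤ M(t,k,ξ) ≤ 1 for all t, k, ξ; (iii) −∂_t M(t,k,ξ)/M(t,k,ξ) ≥ |k|/(k² + (ξ − kt)²) for all k ≠ 0; (iv) |∂_ξ M(t,k,ξ)|/M(t,k,ξ) ≤ C/|k| for all k ≠ 0, uniformly in t and ξ; (v) 1 ≤ C ν^{−1/6} ( √(−∂_t M(t,k,ξ) · M(t,k,ξ)) + ν^{1/2} (k² + (ξ − kt)²)^{1/2} ) for all k ≠ 0; (vi) √(−∂_t M(t,k,ξ) · M(t,k,ξ)) ≤ C (1 + (ξ − η)²)^{1/2} √(−∂_t M(t,k,η) · M(t,k,η)) for all k ≠ 0 and all ξ, η ∈ ℝ. -/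

import Mathlib

open Set
open Real

noncomputable def Mg (a : ℝ) (k : ℤ) (ξ t : ℝ) : ℝ :=
  |(k:ℝ)|⁻¹ * (Real.arctan (ξ/(k:ℝ) - t) - Real.arctan (ξ/(k:ℝ)))
  + ((k:ℝ))⁻¹ * (Real.arctan (a*ξ - a*(k:ℝ)*t) - Real.arctan (a*ξ))

noncomputable def Mfun (a : ℝ) (t : ℝ) (k : ℤ) (ξ : ℝ) : ℝ :=
  if k = 0 then 1 else Real.exp (Mg a k ξ t)

lemma Mg_zero (a : ℝ) (k : ℤ) (ξ : ℝ) : Mg a k ξ 0 = 0 := by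
  simp [Mg]

lemma Mg_hasDerivAt (a : ℝ) {k : ℤ} (hk : (k:ℝ) ≠ 0) (ξ t : ℝ) :
    HasDerivAt (fun s => Mg a k ξ s)
      (-(|(k:ℝ)| / ((k:ℝ)^2 + (ξ - (k:ℝ)*t)^2) + a / (1 + (a*ξ - a*(k:ℝ)*t)^2))) t := by
  have h1 : HasDerivAt (fun s : ℝ => ξ/(k:ℝ) - s) (-1) t := by
    simpa using (hasDerivAt_id t).const_sub (ξ/(k:ℝ))
  have h2 : HasDerivAt (fun s : ℝ => a*ξ - a*(k:ℝ)*s) (-(a*(k:ℝ))) t := by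
    simpa using ((hasDerivAt_id t).const_mul (a*(k:ℝ))).const_sub (a*ξ)
  have H1 := ((h1.arctan).sub_const (Real.arctan (ξ/(k:ℝ)))).const_mul (|(k:ℝ)|⁻¹)
  have H2 := ((h2.arctan).sub_const (Real.arctan (a*ξ))).const_mul (((k:ℝ))⁻¹)
  have H := H1.add H2
  refine H.congr_deriv ?_
  have hden : (1:ℝ) + (ξ/(k:ℝ) - t)^2 = ((k:ℝ)^2 + (ξ - (k:ℝ)*t)^2)/(k:ℝ)^2 := by
    field_simp
  have hpos : (0:ℝ) < (k:ℝ)^2 + (ξ - (k:ℝ)*t)^2 := by positivity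
  have hpos2 : (0:ℝ) < 1 + (a*ξ - a*(k:ℝ)*t)^2 := by positivity
  have habs : |(k:ℝ)| ≠ 0 := abs_ne_zero.mpr hk
  have hsq : (k:ℝ)^2 = |(k:ℝ)|^2 := (sq_abs _).symm
  have e2 : ((k:ℝ))⁻¹ * (1 / (1 + (a*ξ - a*(k:ℝ)*t)^2) * -(a*(k:ℝ))) = -(a / (1 + (a*ξ - a*(k:ℝ)*t)^2)) := by
    field_simp
  have e1 : |(k:ℝ)|⁻¹ * (1 / (1 + (ξ/(k:ℝ) - t)^2) * -1) = -(|(k:ℝ)| / ((k:ℝ)^2 + (ξ - (k:ℝ)*t)^2)) := by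
    rw [hden, one_div_div, hsq]
    have hD : (0:ℝ) < |(k:ℝ)|^2 + (ξ - (k:ℝ)*t)^2 := by positivity
    field_simp
  rw [e1, e2]
  ring

lemma Mg_hasDerivAt_xi (a : ℝ) {k : ℤ} (hk : (k:ℝ) ≠ 0) (ξ t : ℝ) :
    HasDerivAt (fun z => Mg a k z t)
      (|(k:ℝ)|⁻¹ * (1/(1 + (ξ/(k:ℝ) - t)^2) * ((k:ℝ))⁻¹ - 1/(1 + (ξ/(k:ℝ))^2) * ((k:ℝ))⁻¹)
        + ((k:ℝ))⁻¹ * (1/(1 + (a*ξ - a*(k:ℝ)*t)^2) * a - 1/(1 + (a*ξ)^2) * a)) ξ := by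
  have h1 : HasDerivAt (fun z : ℝ => z/(k:ℝ) - t) ((k:ℝ))⁻¹ ξ := by
    simpa [one_div] using ((hasDerivAt_id ξ).div_const (k:ℝ)).sub_const t
  have h1' : HasDerivAt (fun z : ℝ => z/(k:ℝ)) ((k:ℝ))⁻¹ ξ := by
    simpa [one_div] using (hasDerivAt_id ξ).div_const (k:ℝ)
  have h2 : HasDerivAt (fun z : ℝ => a*z - a*(k:ℝ)*t) a ξ := by
    simpa using ((hasDerivAt_id ξ).const_mul a).sub_const (a*(k:ℝ)*t)
  have h2' : HasDerivAt (fun z : ℝ => a*z) a ξ := by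
    simpa using (hasDerivAt_id ξ).const_mul a
  exact ((h1.arctan.sub h1'.arctan).const_mul _).add ((h2.arctan.sub h2'.arctan).const_mul _)

lemma arctan_abs_le (x : ℝ) : |Real.arctan x| ≤ Real.pi / 2 :=
  abs_le.mpr ⟨(Real.neg_pi_div_two_lt_arctan x).le, (Real.arctan_lt_pi_div_two x).le⟩

lemma Mg_ge (a : ℝ) {k : ℤ} (hk : k ≠ 0) (ξ t : ℝ) : -(2*Real.pi) ≤ Mg a k ξ t := by
  have hk1 : (1:ℝ) ≤ |(k:ℝ)| := by
    have := Int.one_le_abs hk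
    calc (1:ℝ) = ((1:ℤ):ℝ) := by norm_num
    _ ≤ ((|k|:ℤ):ℝ) := by exact_mod_cast this
    _ = |(k:ℝ)| := by push_cast; ring
  have hki : |(k:ℝ)|⁻¹ ≤ 1 := by
    rw [inv_le_one_iff₀]; right; exact hk1
  have hki0 : 0 ≤ |(k:ℝ)|⁻¹ := by positivity
  have key : ∀ x y : ℝ, |Real.arctan x - Real.arctan y| ≤ Real.pi := by
    intro x y
    calc |Real.arctan x - Real.arctan y| ≤ |Real.arctan x| + |Real.arctan y| := abs_sub _ _
    _ ≤ Real.pi/2 + Real.pi/2 := add_le_add (arctan_abs_le x) (arctan_abs_le y)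
    _ = Real.pi := by ring
  have h := abs_le.mp (calc
    |Mg a k ξ t| ≤ |(|(k:ℝ)|⁻¹ * (Real.arctan (ξ/(k:ℝ) - t) - Real.arctan (ξ/(k:ℝ))))|
        + |((k:ℝ))⁻¹ * (Real.arctan (a*ξ - a*(k:ℝ)*t) - Real.arctan (a*ξ))| := abs_add_le _ _
    _ ≤ 1 * Real.pi + 1 * Real.pi := by
        apply add_le_add
        · rw [abs_mul, abs_of_nonneg hki0]
          exact mul_le_mul hki (key _ _) (abs_nonneg _) one_pos.le
        · rw [abs_mul, abs_inv]
          exact mul_le_mul hki (key _ _) (abs_nonneg _) one_pos.le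
    _ = 2*Real.pi := by ring)
  linarith [h.1]

lemma Mg_nonpos {a : ℝ} (ha : 0 ≤ a) {k : ℤ} (hk : k ≠ 0) (ξ : ℝ) {t : ℝ} (ht : 0 ≤ t) :
    Mg a k ξ t ≤ 0 := by
  have hk0 : (k:ℝ) ≠ 0 := by exact_mod_cast hk
  have h1 : |(k:ℝ)|⁻¹ * (Real.arctan (ξ/(k:ℝ) - t) - Real.arctan (ξ/(k:ℝ))) ≤ 0 := by
    apply mul_nonpos_of_nonneg_of_nonpos (by positivity)
    rw [sub_nonpos]
    exact Real.arctan_strictMono.monotone (by linarith)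
  have h2 : ((k:ℝ))⁻¹ * (Real.arctan (a*ξ - a*(k:ℝ)*t) - Real.arctan (a*ξ)) ≤ 0 := by
    rcases lt_or_gt_of_ne hk0 with hneg | hpos
    · apply mul_nonpos_of_nonpos_of_nonneg (by simpa using (inv_nonpos).mpr hneg.le)
      rw [sub_nonneg]
      apply Real.arctan_strictMono.monotone
      nlinarith [mul_nonpos_of_nonpos_of_nonneg (mul_nonpos_of_nonneg_of_nonpos ha hneg.le) ht]
    · apply mul_nonpos_of_nonneg_of_nonpos (by positivity)
      rw [sub_nonpos]
      apply Real.arctan_strictMono.monotone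
      nlinarith [mul_nonneg (mul_nonneg ha hpos.le) ht]
  unfold Mg; linarith

lemma one_le_abs_k {k : ℤ} (hk : k ≠ 0) : (1:ℝ) ≤ |(k:ℝ)| := by
  have := Int.one_le_abs hk
  calc (1:ℝ) = ((1:ℤ):ℝ) := by norm_num
  _ ≤ ((|k|:ℤ):ℝ) := by exact_mod_cast this
  _ = |(k:ℝ)| := by push_cast; ring

noncomputable def PQ (a : ℝ) (k : ℤ) (ξ t : ℝ) : ℝ :=
  |(k:ℝ)| / ((k:ℝ)^2 + (ξ - (k:ℝ)*t)^2) + a / (1 + (a*ξ - a*(k:ℝ)*t)^2)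

lemma PQ_nonneg {a : ℝ} (ha : 0 ≤ a) (k : ℤ) (ξ t : ℝ) : 0 ≤ PQ a k ξ t := by
  unfold PQ
  have h1 : (0:ℝ) ≤ |(k:ℝ)| / ((k:ℝ)^2 + (ξ - (k:ℝ)*t)^2) := by positivity
  have h2 : (0:ℝ) ≤ a / (1 + (a*ξ - a*(k:ℝ)*t)^2) := by positivity
  linarith

lemma Mfun_eq (a : ℝ) {k : ℤ} (hk : k ≠ 0) (t ξ : ℝ) :
    Mfun a t k ξ = Real.exp (Mg a k ξ t) := by simp [Mfun, hk]

lemma Mfun_deriv (a : ℝ) {k : ℤ} (hk : k ≠ 0) (ξ t : ℝ) :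
    deriv (fun s => Mfun a s k ξ) t = -(Real.exp (Mg a k ξ t) * PQ a k ξ t) := by
  have hk0 : (k:ℝ) ≠ 0 := by exact_mod_cast hk
  have hfe : (fun s => Mfun a s k ξ) = fun s => Real.exp (Mg a k ξ s) := by
    funext s; simp [Mfun, hk]
  have H := (Mg_hasDerivAt a hk0 ξ t).exp
  rw [hfe, H.deriv]
  unfold PQ; ring

lemma Mfun_sqrt {a : ℝ} (ha : 0 ≤ a) {k : ℤ} (hk : k ≠ 0) (ξ t : ℝ) :
    Real.sqrt (-(deriv (fun s => Mfun a s k ξ) t) * Mfun a t k ξ)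
      = Real.sqrt (PQ a k ξ t) * Real.exp (Mg a k ξ t) := by
  rw [Mfun_deriv a hk ξ t, Mfun_eq a hk, neg_neg]
  rw [show Real.exp (Mg a k ξ t) * PQ a k ξ t * Real.exp (Mg a k ξ t)
      = PQ a k ξ t * (Real.exp (Mg a k ξ t))^2 from by ring]
  rw [Real.sqrt_mul (PQ_nonneg ha k ξ t), Real.sqrt_sq (Real.exp_nonneg _)]

lemma PQ_compare {a : ℝ} (ha0 : 0 ≤ a) (ha1 : a ≤ 1) {k : ℤ} (hk : k ≠ 0) (ξ η t : ℝ) :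
    PQ a k ξ t ≤ 2*(1+(ξ-η)^2) * PQ a k η t := by
  have hk2 : (1:ℝ) ≤ (k:ℝ)^2 := by
    have := one_le_abs_k hk; nlinarith [abs_nonneg (k:ℝ), sq_abs (k:ℝ)]
  have ha2 : a^2 ≤ 1 := by nlinarith
  have hDξ : (0:ℝ) < (k:ℝ)^2 + (ξ - (k:ℝ)*t)^2 := by nlinarith [sq_nonneg (ξ - (k:ℝ)*t)]
  have hDη : (0:ℝ) < (k:ℝ)^2 + (η - (k:ℝ)*t)^2 := by nlinarith [sq_nonneg (η - (k:ℝ)*t)]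
  have hEξ : (0:ℝ) < 1 + (a*ξ - a*(k:ℝ)*t)^2 := by positivity
  have hEη : (0:ℝ) < 1 + (a*η - a*(k:ℝ)*t)^2 := by positivity
  have hs1 : ((k:ℝ)^2 + (η - (k:ℝ)*t)^2) ≤ 2*(1+(ξ-η)^2)*((k:ℝ)^2 + (ξ - (k:ℝ)*t)^2) := by
    nlinarith [sq_nonneg ((ξ - (k:ℝ)*t) + (ξ - η)),
      mul_nonneg (sub_nonneg.mpr hk2) (sq_nonneg (ξ-η)),
      mul_nonneg (sq_nonneg (ξ-η)) (sq_nonneg (ξ - (k:ℝ)*t))]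
  have hs2 : (1 + (a*η - a*(k:ℝ)*t)^2) ≤ 2*(1+(ξ-η)^2)*(1 + (a*ξ - a*(k:ℝ)*t)^2) := by
    nlinarith [sq_nonneg ((a*ξ - a*(k:ℝ)*t) + a*(ξ - η)),
      mul_nonneg (sub_nonneg.mpr ha2) (sq_nonneg (ξ-η)),
      mul_nonneg (sq_nonneg (ξ-η)) (sq_nonneg (a*ξ - a*(k:ℝ)*t))]
  have hP : |(k:ℝ)| / ((k:ℝ)^2 + (ξ - (k:ℝ)*t)^2)
      ≤ 2*(1+(ξ-η)^2) * (|(k:ℝ)| / ((k:ℝ)^2 + (η - (k:ℝ)*t)^2)) := by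
    rw [← mul_div_assoc, div_le_div_iff₀ hDξ hDη]
    nlinarith [mul_le_mul_of_nonneg_left hs1 (abs_nonneg (k:ℝ))]
  have hQ : a / (1 + (a*ξ - a*(k:ℝ)*t)^2)
      ≤ 2*(1+(ξ-η)^2) * (a / (1 + (a*η - a*(k:ℝ)*t)^2)) := by
    rw [← mul_div_assoc, div_le_div_iff₀ hEξ hEη]
    nlinarith [mul_le_mul_of_nonneg_left hs2 ha0]
  have h := add_le_add hP hQ
  unfold PQ
  calc |(k:ℝ)| / ((k:ℝ)^2 + (ξ - (k:ℝ)*t)^2) + a / (1 + (a*ξ - a*(k:ℝ)*t)^2)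
      ≤ 2*(1+(ξ-η)^2) * (|(k:ℝ)| / ((k:ℝ)^2 + (η - (k:ℝ)*t)^2))
        + 2*(1+(ξ-η)^2) * (a / (1 + (a*η - a*(k:ℝ)*t)^2)) := h
  _ = 2*(1+(ξ-η)^2) * (|(k:ℝ)| / ((k:ℝ)^2 + (η - (k:ℝ)*t)^2) + a / (1 + (a*η - a*(k:ℝ)*t)^2)) := by ring


/-- **Lemma 2.2: existence of the Fourier multiplier `M`.**
There are constants `c ∈ (0,1)` and `C > 0` such that for every `ν ∈ (0,1)` there is a
multiplier `M(t,k,ξ)`, `C¹` in `t` and in `ξ` and nonincreasing in `t`, satisfying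
properties (i)–(vi) (for `t ≥ 0`). -/
theorem stmt3 :
    ∃ c C : ℝ, c ∈ Ioo (0 : ℝ) 1 ∧ 0 < C ∧
      ∀ ν ∈ Ioo (0 : ℝ) 1, ∃ M : ℝ → ℤ → ℝ → ℝ,
        -- C¹ in t and in ξ
        (∀ (k : ℤ) (ξ : ℝ), ContDiff ℝ 1 (fun t => M t k ξ)) ∧
        (∀ (t : ℝ) (k : ℤ), ContDiff ℝ 1 (fun ξ => M t k ξ)) ∧
        -- ∂ₜ M ≤ 0
        (∀ t ≥ (0 : ℝ), ∀ (k : ℤ) (ξ : ℝ), deriv (fun s => M s k ξ) t ≤ 0) ∧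
        -- (i) M(0,k,ξ) = 1 and M(t,0,ξ) = 1
        (∀ (k : ℤ) (ξ : ℝ), M 0 k ξ = 1) ∧
        (∀ t ≥ (0 : ℝ), ∀ ξ : ℝ, M t 0 ξ = 1) ∧
        -- (ii) c ≤ M ≤ 1
        (∀ t ≥ (0 : ℝ), ∀ (k : ℤ) (ξ : ℝ), M t k ξ ∈ Icc c 1) ∧
        -- (iii) −∂ₜM/M ≥ |k|/(k²+(ξ−kt)²) for k ≠ 0
        (∀ t ≥ (0 : ℝ), ∀ k : ℤ, k ≠ 0 → ∀ ξ : ℝ,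
          |(k : ℝ)| / ((k : ℝ) ^ 2 + (ξ - (k : ℝ) * t) ^ 2)
            ≤ -(deriv (fun s => M s k ξ) t) / M t k ξ) ∧
        -- (iv) |∂_ξ M|/M ≤ C/|k| for k ≠ 0
        (∀ t ≥ (0 : ℝ), ∀ k : ℤ, k ≠ 0 → ∀ ξ : ℝ,
          |deriv (fun z => M t k z) ξ| / M t k ξ ≤ C / |(k : ℝ)|) ∧
        -- (v) 1 ≤ C ν^{−1/6} (√(−∂ₜM·M) + ν^{1/2}(k²+(ξ−kt)²)^{1/2}) for k ≠ 0
        (∀ t ≥ (0 : ℝ), ∀ k : ℤ, k ≠ 0 → ∀ ξ : ℝ,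
          1 ≤ C * ν ^ (-(1 : ℝ) / 6) *
              (Real.sqrt (-(deriv (fun s => M s k ξ) t) * M t k ξ)
                + ν ^ ((1 : ℝ) / 2) * Real.sqrt ((k : ℝ) ^ 2 + (ξ - (k : ℝ) * t) ^ 2))) ∧
        -- (vi) √(−∂ₜM(t,k,ξ)M(t,k,ξ)) ≤ C ⟨ξ−η⟩ √(−∂ₜM(t,k,η)M(t,k,η)) for k ≠ 0
        (∀ t ≥ (0 : ℝ), ∀ k : ℤ, k ≠ 0 → ∀ ξ η : ℝ,
          Real.sqrt (-(deriv (fun s => M s k ξ) t) * M t k ξ)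
            ≤ C * Real.sqrt (1 + (ξ - η) ^ 2) *
                Real.sqrt (-(deriv (fun s => M s k η) t) * M t k η)) := by
  have hpi : (0:ℝ) < Real.pi := Real.pi_pos
  have he1 : Real.exp (2*Real.pi) * Real.exp (-(2*Real.pi)) = 1 := by
    rw [← Real.exp_add]; norm_num
  have hC4 : (4:ℝ) ≤ 2*Real.exp (2*Real.pi) := by
    nlinarith [Real.add_one_le_exp (2*Real.pi), Real.pi_gt_three]
  refine ⟨Real.exp (-(2*Real.pi)), 2*Real.exp (2*Real.pi),
    ⟨Real.exp_pos _, by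
      rw [show (1:ℝ) = Real.exp 0 from (Real.exp_zero).symm]
      exact Real.exp_lt_exp.mpr (by nlinarith)⟩, by positivity, ?_⟩
  intro ν hν
  obtain ⟨hν0, hν1⟩ := hν
  obtain ⟨a, ha_def⟩ : ∃ a : ℝ, a = ν ^ ((1:ℝ)/3) := ⟨_, rfl⟩
  have ha0 : 0 < a := ha_def ▸ Real.rpow_pos_of_pos hν0 _
  have ha1 : a ≤ 1 := ha_def ▸ Real.rpow_le_one hν0.le hν1.le (by norm_num)
  have hν16 : ν ^ (-(1:ℝ)/6) * ν ^ ((1:ℝ)/6) = 1 := by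
    rw [← Real.rpow_add hν0]; norm_num
  have hsa : Real.sqrt a = ν ^ ((1:ℝ)/6) := by
    rw [ha_def, Real.sqrt_eq_rpow, ← Real.rpow_mul hν0.le]; norm_num
  have hEge : ∀ (k : ℤ) (hk : k ≠ 0) (ξ t : ℝ),
      Real.exp (-(2*Real.pi)) ≤ Real.exp (Mg a k ξ t) :=
    fun k hk ξ t => Real.exp_le_exp.mpr (Mg_ge a hk ξ t)
  have hEle1 : ∀ (k : ℤ) (hk : k ≠ 0) (ξ : ℝ) {t : ℝ} (ht : 0 ≤ t),
      Real.exp (Mg a k ξ t) ≤ 1 := by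
    intro k hk ξ t ht
    rw [show (1:ℝ) = Real.exp 0 from (Real.exp_zero).symm]
    exact Real.exp_le_exp.mpr (Mg_nonpos ha0.le hk ξ ht)
  refine ⟨Mfun a, ?_, ?_, ?_, ?_, ?_, ?_, ?_, ?_, ?_, ?_⟩
  · -- C¹ in t
    intro k ξ
    by_cases hk : k = 0
    · subst hk
      simpa [Mfun] using contDiff_const (c := (1:ℝ)) (𝕜 := ℝ) (E := ℝ)
    · rw [show (fun t => Mfun a t k ξ) = fun t => Real.exp (Mg a k ξ t) from
        funext fun t => Mfun_eq a hk t ξ]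
      apply ContDiff.exp
      unfold Mg
      apply ContDiff.add
      · exact contDiff_const.mul
          ((Real.contDiff_arctan.comp (contDiff_const.sub contDiff_id)).sub contDiff_const)
      · exact contDiff_const.mul
          ((Real.contDiff_arctan.comp (contDiff_const.sub (contDiff_const.mul contDiff_id))).sub
            contDiff_const)
  · -- C¹ in ξ
    intro t k
    by_cases hk : k = 0
    · subst hk
      simpa [Mfun] using contDiff_const (c := (1:ℝ)) (𝕜 := ℝ) (E := ℝ)
    · rw [show (fun ξ => Mfun a t k ξ) = fun ξ => Real.exp (Mg a k ξ t) from
        funext fun ξ => Mfun_eq a hk t ξ]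
      apply ContDiff.exp
      unfold Mg
      apply ContDiff.add
      · exact contDiff_const.mul
          ((Real.contDiff_arctan.comp ((contDiff_id.div_const _).sub contDiff_const)).sub
            (Real.contDiff_arctan.comp (contDiff_id.div_const _)))
      · exact contDiff_const.mul
          ((Real.contDiff_arctan.comp ((contDiff_const.mul contDiff_id).sub contDiff_const)).sub
            (Real.contDiff_arctan.comp (contDiff_const.mul contDiff_id)))
  · -- ∂ₜ M ≤ 0
    intro t ht k ξ
    by_cases hk : k = 0
    · subst hk
      rw [show (fun s => Mfun a s 0 ξ) = fun _ => (1:ℝ) from funext fun s => by simp [Mfun]]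
      simp
    · rw [Mfun_deriv a hk]
      exact neg_nonpos.mpr (mul_nonneg (Real.exp_nonneg _) (PQ_nonneg ha0.le k ξ t))
  · -- M 0 k ξ = 1
    intro k ξ
    by_cases hk : k = 0
    · simp [Mfun, hk]
    · rw [Mfun_eq a hk, Mg_zero, Real.exp_zero]
  · -- M t 0 ξ = 1
    intro t ht ξ; simp [Mfun]
  · -- c ≤ M ≤ 1
    intro t ht k ξ
    by_cases hk : k = 0
    · subst hk
      simp only [Mfun, if_pos rfl]
      constructor
      · rw [show (1:ℝ) = Real.exp 0 from (Real.exp_zero).symm]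
        exact Real.exp_le_exp.mpr (by nlinarith)
      · exact le_refl 1
    · rw [Mfun_eq a hk]
      exact ⟨hEge k hk ξ t, hEle1 k hk ξ ht⟩
  · -- (iii)
    intro t ht k hk ξ
    rw [Mfun_deriv a hk, Mfun_eq a hk,
      show -(-(Real.exp (Mg a k ξ t) * PQ a k ξ t)) / Real.exp (Mg a k ξ t) = PQ a k ξ t from by
        rw [neg_neg]; field_simp]
    unfold PQ
    have h2 : (0:ℝ) ≤ a / (1 + (a*ξ - a*(k:ℝ)*t)^2) := by positivity
    linarith
  · -- (iv)
    intro t ht k hk ξ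
    have hk0 : (k:ℝ) ≠ 0 := by exact_mod_cast hk
    have hk1 := one_le_abs_k hk
    have hkpos : (0:ℝ) < |(k:ℝ)| := lt_of_lt_of_le one_pos hk1
    have hfe : (fun z => Mfun a t k z) = fun z => Real.exp (Mg a k z t) :=
      funext fun z => Mfun_eq a hk t z
    have H := (Mg_hasDerivAt_xi a hk0 ξ t).exp
    rw [hfe, H.deriv, Mfun_eq a hk, abs_mul, Real.abs_exp, mul_comm, mul_div_assoc,
      div_self (Real.exp_ne_zero _), mul_one]
    have hbound : ∀ x c : ℝ, |c| ≤ 1 → |1/(1+x^2) * c| ≤ 1 := by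
      intro x c hc
      rw [abs_mul]
      have h1 : |1/(1+x^2)| ≤ 1 := by
        rw [abs_of_nonneg (by positivity), div_le_one (by positivity)]
        nlinarith [sq_nonneg x]
      calc |1/(1+x^2)| * |c| ≤ 1 * 1 := mul_le_mul h1 hc (abs_nonneg c) one_pos.le
      _ = 1 := by norm_num
    have hkinv : |(k:ℝ)⁻¹| ≤ 1 := by
      rw [abs_inv, inv_le_one_iff₀]; right; exact hk1
    have hainv : |a| ≤ 1 := by rw [abs_of_pos ha0]; exact ha1
    have hik0 : (0:ℝ) ≤ |(k:ℝ)|⁻¹ := by positivity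
    have t1 : |(|(k:ℝ)|⁻¹ * (1/(1 + (ξ/(k:ℝ) - t)^2) * ((k:ℝ))⁻¹
        - 1/(1 + (ξ/(k:ℝ))^2) * ((k:ℝ))⁻¹))| ≤ |(k:ℝ)|⁻¹ * 2 := by
      rw [abs_mul, abs_of_nonneg hik0]
      apply mul_le_mul_of_nonneg_left _ hik0
      calc |1/(1 + (ξ/(k:ℝ) - t)^2) * ((k:ℝ))⁻¹ - 1/(1 + (ξ/(k:ℝ))^2) * ((k:ℝ))⁻¹|
          ≤ |1/(1 + (ξ/(k:ℝ) - t)^2) * ((k:ℝ))⁻¹| + |1/(1 + (ξ/(k:ℝ))^2) * ((k:ℝ))⁻¹| :=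
            abs_sub _ _
      _ ≤ 1 + 1 := add_le_add (hbound _ _ hkinv) (hbound _ _ hkinv)
      _ = 2 := by norm_num
    have t2 : |((k:ℝ))⁻¹ * (1/(1 + (a*ξ - a*(k:ℝ)*t)^2) * a - 1/(1 + (a*ξ)^2) * a)|
        ≤ |(k:ℝ)|⁻¹ * 2 := by
      rw [abs_mul, abs_inv]
      apply mul_le_mul_of_nonneg_left _ hik0
      calc |1/(1 + (a*ξ - a*(k:ℝ)*t)^2) * a - 1/(1 + (a*ξ)^2) * a|
          ≤ |1/(1 + (a*ξ - a*(k:ℝ)*t)^2) * a| + |1/(1 + (a*ξ)^2) * a| := abs_sub _ _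
      _ ≤ 1 + 1 := add_le_add (hbound _ _ hainv) (hbound _ _ hainv)
      _ = 2 := by norm_num
    calc |(|(k:ℝ)|⁻¹ * (1/(1 + (ξ/(k:ℝ) - t)^2) * ((k:ℝ))⁻¹ - 1/(1 + (ξ/(k:ℝ))^2) * ((k:ℝ))⁻¹)
          + ((k:ℝ))⁻¹ * (1/(1 + (a*ξ - a*(k:ℝ)*t)^2) * a - 1/(1 + (a*ξ)^2) * a))|
        ≤ |(|(k:ℝ)|⁻¹ * (1/(1 + (ξ/(k:ℝ) - t)^2) * ((k:ℝ))⁻¹ - 1/(1 + (ξ/(k:ℝ))^2) * ((k:ℝ))⁻¹))|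
          + |((k:ℝ))⁻¹ * (1/(1 + (a*ξ - a*(k:ℝ)*t)^2) * a - 1/(1 + (a*ξ)^2) * a)| := abs_add_le _ _
    _ ≤ |(k:ℝ)|⁻¹ * 2 + |(k:ℝ)|⁻¹ * 2 := add_le_add t1 t2
    _ = 4 / |(k:ℝ)| := by rw [div_eq_mul_inv]; ring
    _ ≤ 2*Real.exp (2*Real.pi) / |(k:ℝ)| := by gcongr
  · -- (v)
    intro t ht k hk ξ
    rw [Mfun_sqrt ha0.le hk ξ t]
    have hsq0 : (0:ℝ) ≤ Real.sqrt (PQ a k ξ t) * Real.exp (Mg a k ξ t) := by positivity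
    have hD0 : (0:ℝ) ≤ ν^((1:ℝ)/2) * Real.sqrt ((k:ℝ)^2 + (ξ-(k:ℝ)*t)^2) := by positivity
    by_cases hcase : (a*ξ - a*(k:ℝ)*t)^2 ≤ 1
    · have hQ : a/2 ≤ PQ a k ξ t := by
        unfold PQ
        have h1 : (0:ℝ) ≤ |(k:ℝ)| / ((k:ℝ)^2 + (ξ - (k:ℝ)*t)^2) := by positivity
        have h2 : a/2 ≤ a/(1 + (a*ξ - a*(k:ℝ)*t)^2) := by
          apply div_le_div_of_nonneg_left ha0.le (by positivity) (by linarith)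
        linarith
      have hS : Real.exp (-(2*Real.pi)) * Real.sqrt (a/2)
          ≤ Real.sqrt (PQ a k ξ t) * Real.exp (Mg a k ξ t) := by
        rw [mul_comm]
        exact mul_le_mul (Real.sqrt_le_sqrt hQ) (hEge k hk ξ t) (Real.exp_pos _).le
          (Real.sqrt_nonneg _)
      have hval : Real.sqrt (a/2) = ν^((1:ℝ)/6) / Real.sqrt 2 := by
        rw [Real.sqrt_div ha0.le, hsa]
      have hs2le : Real.sqrt 2 ≤ 2 := by
        nlinarith [Real.sq_sqrt (by norm_num : (0:ℝ) ≤ 2), Real.sqrt_nonneg 2]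
      have hs2pos : (0:ℝ) < Real.sqrt 2 := by positivity
      have hnum : 2*Real.exp (2*Real.pi) * ν^(-(1:ℝ)/6)
          * (Real.exp (-(2*Real.pi)) * (ν^((1:ℝ)/6) / Real.sqrt 2)) = 2 / Real.sqrt 2 := by
        linear_combination (2/Real.sqrt 2 * (ν^(-(1:ℝ)/6) * ν^((1:ℝ)/6))) * he1
          + (2/Real.sqrt 2) * hν16
      calc (1:ℝ) ≤ 2 / Real.sqrt 2 := by
            rw [le_div_iff₀ hs2pos]; linarith
      _ = 2*Real.exp (2*Real.pi) * ν^(-(1:ℝ)/6)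
            * (Real.exp (-(2*Real.pi)) * (ν^((1:ℝ)/6) / Real.sqrt 2)) := hnum.symm
      _ = 2*Real.exp (2*Real.pi) * ν^(-(1:ℝ)/6) * (Real.exp (-(2*Real.pi)) * Real.sqrt (a/2)) := by
          rw [hval]
      _ ≤ 2*Real.exp (2*Real.pi) * ν^(-(1:ℝ)/6)
            * (Real.sqrt (PQ a k ξ t) * Real.exp (Mg a k ξ t)) := by
          apply mul_le_mul_of_nonneg_left hS (by positivity)
      _ ≤ 2*Real.exp (2*Real.pi) * ν^(-(1:ℝ)/6)
            * (Real.sqrt (PQ a k ξ t) * Real.exp (Mg a k ξ t)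
              + ν^((1:ℝ)/2) * Real.sqrt ((k:ℝ)^2 + (ξ-(k:ℝ)*t)^2)) := by
          apply mul_le_mul_of_nonneg_left (le_add_of_nonneg_right hD0) (by positivity)
    · have h1 : 1 ≤ |a*ξ - a*(k:ℝ)*t| := by
        nlinarith [sq_abs (a*ξ - a*(k:ℝ)*t), abs_nonneg (a*ξ - a*(k:ℝ)*t)]
      rw [show a*ξ - a*(k:ℝ)*t = a*(ξ - (k:ℝ)*t) from by ring, abs_mul, abs_of_pos ha0] at h1
      have hu : a⁻¹ ≤ |ξ - (k:ℝ)*t| := by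
        rw [inv_le_iff_one_le_mul₀ ha0]
        linarith
      have hainv : a⁻¹ = ν^(-(1:ℝ)/3) := by
        rw [show (-(1:ℝ)/3) = -((1:ℝ)/3) from by norm_num, Real.rpow_neg hν0.le, ha_def]
      have hDu : |ξ - (k:ℝ)*t| ≤ Real.sqrt ((k:ℝ)^2 + (ξ-(k:ℝ)*t)^2) := by
        rw [← Real.sqrt_sq_eq_abs]
        exact Real.sqrt_le_sqrt (by nlinarith [sq_nonneg (k:ℝ)])
      have hνD : ν^((1:ℝ)/6) ≤ ν^((1:ℝ)/2) * Real.sqrt ((k:ℝ)^2 + (ξ-(k:ℝ)*t)^2) := by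
        calc ν^((1:ℝ)/6) = ν^((1:ℝ)/2) * ν^(-(1:ℝ)/3) := by
              rw [← Real.rpow_add hν0]; norm_num
        _ = ν^((1:ℝ)/2) * a⁻¹ := by rw [hainv]
        _ ≤ ν^((1:ℝ)/2) * |ξ - (k:ℝ)*t| := by
              apply mul_le_mul_of_nonneg_left hu (by positivity)
        _ ≤ ν^((1:ℝ)/2) * Real.sqrt ((k:ℝ)^2 + (ξ-(k:ℝ)*t)^2) := by
              apply mul_le_mul_of_nonneg_left hDu (by positivity)
      calc (1:ℝ) ≤ 2*Real.exp (2*Real.pi) := by linarith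
      _ = 2*Real.exp (2*Real.pi) * (ν^(-(1:ℝ)/6) * ν^((1:ℝ)/6)) := by rw [hν16]; ring
      _ ≤ 2*Real.exp (2*Real.pi) * (ν^(-(1:ℝ)/6)
            * (Real.sqrt (PQ a k ξ t) * Real.exp (Mg a k ξ t)
              + ν^((1:ℝ)/2) * Real.sqrt ((k:ℝ)^2 + (ξ-(k:ℝ)*t)^2))) := by
          apply mul_le_mul_of_nonneg_left _ (by positivity)
          apply mul_le_mul_of_nonneg_left _ (by positivity)
          linarith
      _ = 2*Real.exp (2*Real.pi) * ν^(-(1:ℝ)/6)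
            * (Real.sqrt (PQ a k ξ t) * Real.exp (Mg a k ξ t)
              + ν^((1:ℝ)/2) * Real.sqrt ((k:ℝ)^2 + (ξ-(k:ℝ)*t)^2)) := by ring
  · -- (vi)
    intro t ht k hk ξ η
    rw [Mfun_sqrt ha0.le hk ξ t, Mfun_sqrt ha0.le hk η t]
    have hcmp := PQ_compare ha0.le ha1 hk ξ η t
    have hEξ1 := hEle1 k hk ξ ht
    have hEηc := hEge k hk η t
    have hs2le : Real.sqrt 2 ≤ 2 := by
      nlinarith [Real.sq_sqrt (by norm_num : (0:ℝ) ≤ 2), Real.sqrt_nonneg 2]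
    calc Real.sqrt (PQ a k ξ t) * Real.exp (Mg a k ξ t)
        ≤ Real.sqrt (PQ a k ξ t) * 1 :=
          mul_le_mul_of_nonneg_left hEξ1 (Real.sqrt_nonneg _)
    _ = Real.sqrt (PQ a k ξ t) := by ring
    _ ≤ Real.sqrt (2*(1+(ξ-η)^2) * PQ a k η t) := Real.sqrt_le_sqrt hcmp
    _ = Real.sqrt 2 * (Real.sqrt (1+(ξ-η)^2) * Real.sqrt (PQ a k η t)) := by
        rw [show (2:ℝ)*(1+(ξ-η)^2) * PQ a k η t = 2*((1+(ξ-η)^2) * PQ a k η t) from by ring,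
          Real.sqrt_mul (by norm_num), Real.sqrt_mul (by positivity)]
    _ ≤ 2 * (Real.sqrt (1+(ξ-η)^2) * Real.sqrt (PQ a k η t)) :=
        mul_le_mul_of_nonneg_right hs2le (by positivity)
    _ = 2*Real.exp (2*Real.pi) * Real.sqrt (1+(ξ-η)^2)
          * (Real.sqrt (PQ a k η t) * Real.exp (-(2*Real.pi))) := by
        linear_combination
          (-(2 * Real.sqrt (1+(ξ-η)^2) * Real.sqrt (PQ a k η t))) * he1
    _ ≤ 2*Real.exp (2*Real.pi) * Real.sqrt (1+(ξ-η)^2)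
          * (Real.sqrt (PQ a k η t) * Real.exp (Mg a k η t)) := by
        apply mul_le_mul_of_nonneg_left _ (by positivity)
        exact mul_le_mul_of_nonneg_left hEηc (Real.sqrt_nonneg _)
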